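/- Let p be a prime and let b : ℕ → ℚ_p be a sequence. The following are equivalent: (i) for every real number r with 0 < r < 1, one has ‖b_n‖_p · r^n → 0 as n → ∞; (ii) for every h ∈ ℕ, the set of real numbers { ‖b_n‖_p · ‖(⌊n/p^h⌋)!‖_p : n ∈ ℕ } is bounded above, where ⌊n/p^h⌋ denotes the integer part of n/p^h. -/

import Mathlib

open Filter

namespace Stmt3

lemma norm_factorial {p : ℕ} [Fact p.Prime] (m : ℕ) :
    ‖((m.factorial : ℚ_[p]))‖ = (p : ℝ) ^ (-(padicValNat p m.factorial : ℝ)) := by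
  have h0 : ((m.factorial : ℚ)) ≠ 0 := by exact_mod_cast m.factorial_ne_zero
  rw [show ((m.factorial : ℚ_[p])) = (((m.factorial : ℚ)) : ℚ_[p]) by push_cast; ring,
    Padic.eq_padicNorm, padicNorm.eq_zpow_of_nonzero h0, padicValRat.of_nat]
  push_cast
  rw [← Real.rpow_intCast]
  simp [padicValRat.of_nat]

lemma val_fact_le {p : ℕ} [Fact p.Prime] (m : ℕ) :
    (p - 1) * padicValNat p m.factorial ≤ m := by
  rw [sub_one_mul_padicValNat_factorial]
  exact Nat.sub_le _ _

lemma div_le_val_fact {p : ℕ} [Fact p.Prime] (m : ℕ) :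
    m / p ≤ padicValNat p m.factorial := by
  rw [padicValNat_factorial (n := m) (b := Nat.log p m + 2) (by omega)]
  calc m / p = m / p ^ 1 := by rw [pow_one]
    _ ≤ _ := Finset.single_le_sum (f := fun i => m / p ^ i)
        (fun i _ => Nat.zero_le _) (by simp [Finset.mem_Ico])

/-- A sequence `b : ℕ → ℚ_p` satisfies `‖b n‖ · r ^ n → 0` for every real `0 < r < 1` if and
only if, for every `h ∈ ℕ`, the set of real numbers `‖b n‖ · ‖⌊n/p^h⌋!‖` is bounded above. -/
theorem growth_equivalence (p : ℕ) [Fact p.Prime] (b : ℕ → ℚ_[p]) :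
    (∀ r : ℝ, 0 < r → r < 1 →
        Tendsto (fun n : ℕ => ‖b n‖ * r ^ n) atTop (nhds 0)) ↔
      (∀ h : ℕ, BddAbove
        {x : ℝ | ∃ n : ℕ, x = ‖b n‖ * ‖((Nat.factorial (n / p ^ h) : ℚ_[p]))‖}) := by
  have hp1 : (1 : ℝ) < p := by exact_mod_cast (Fact.out : p.Prime).one_lt
  have hp0 : (0 : ℝ) < p := by linarith
  constructor
  · intro H h
    set Q : ℕ := p ^ (h + 1) with hQdef
    have hQn0 : 0 < Q := pow_pos (Fact.out : p.Prime).pos _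
    have hQ0 : (0 : ℝ) < Q := by exact_mod_cast hQn0
    set r : ℝ := (p : ℝ) ^ (-(1 : ℝ) / Q) with hrdef
    have hexpneg : -(1 : ℝ) / Q < 0 := div_neg_of_neg_of_pos (by norm_num) hQ0
    have hr0 : 0 < r := Real.rpow_pos_of_pos hp0 _
    have hr1 : r < 1 := Real.rpow_lt_one_of_one_lt_of_neg hp1 hexpneg
    obtain ⟨C, hC⟩ := (H r hr0 hr1).bddAbove_range
    refine ⟨(p : ℝ) * C, ?_⟩
    rintro x ⟨n, rfl⟩
    have hCn : ‖b n‖ * r ^ n ≤ C := hC ⟨n, rfl⟩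
    set m : ℕ := n / p ^ h with hmdef
    set v : ℕ := padicValNat p m.factorial with hvdef
    have hdiv : n / Q ≤ v := by
      have h1 : m / p = n / Q := by
        rw [hmdef, Nat.div_div_eq_div_mul, hQdef, pow_succ]
      rw [← h1]; exact div_le_val_fact m
    have hQn : 0 < Q := pow_pos (Fact.out : p.Prime).pos _
    have hfloor : (n : ℝ) / Q - 1 < ((n / Q : ℕ) : ℝ) := by
      have h2 : n % Q < Q := Nat.mod_lt _ hQn
      have h3 : Q * (n / Q) + n % Q = n := Nat.div_add_mod n Q
      have h4 : (n : ℝ) = (Q : ℝ) * ((n / Q : ℕ) : ℝ) + ((n % Q : ℕ) : ℝ) := by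
        exact_mod_cast h3.symm
      have h5 : ((n % Q : ℕ) : ℝ) < Q := by exact_mod_cast h2
      rw [sub_lt_iff_lt_add, div_lt_iff₀ hQ0]
      nlinarith
    have hexp : -(v : ℝ) ≤ 1 + -(1 : ℝ) / Q * n := by
      have hcast : ((n / Q : ℕ) : ℝ) ≤ (v : ℝ) := by exact_mod_cast hdiv
      have h6 : (n : ℝ) / Q - 1 ≤ (v : ℝ) := le_trans (le_of_lt hfloor) hcast
      have hn : -(1 : ℝ) / Q * n = -((n : ℝ) / Q) := by ring
      rw [hn]; linarith
    have hkey : ‖((m.factorial : ℚ_[p]))‖ ≤ (p : ℝ) * r ^ n := by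
      rw [norm_factorial]
      calc (p : ℝ) ^ (-(v : ℝ)) ≤ (p : ℝ) ^ (1 + -(1 : ℝ) / Q * n) :=
            Real.rpow_le_rpow_of_exponent_le (le_of_lt hp1) hexp
        _ = (p : ℝ) * r ^ n := by
            rw [Real.rpow_add hp0, Real.rpow_one, hrdef, ← Real.rpow_natCast
              ((p : ℝ) ^ (-(1 : ℝ) / Q)) n, ← Real.rpow_mul (le_of_lt hp0)]
    calc ‖b n‖ * ‖((m.factorial : ℚ_[p]))‖ ≤ ‖b n‖ * ((p : ℝ) * r ^ n) :=
          mul_le_mul_of_nonneg_left hkey (norm_nonneg _)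
      _ = (p : ℝ) * (‖b n‖ * r ^ n) := by ring
      _ ≤ (p : ℝ) * C := mul_le_mul_of_nonneg_left hCn (le_of_lt hp0)
  · intro H r hr0 hr1
    have hrinv : 1 < r⁻¹ := one_lt_inv_iff₀.mpr ⟨hr0, hr1⟩
    obtain ⟨k, hk⟩ := pow_unbounded_of_one_lt (p : ℝ) hrinv
    set N : ℕ := (p - 1) * p ^ k with hNdef
    have hp2 : 2 ≤ p := (Fact.out : p.Prime).two_le
    have hkN : k ≤ N := by
      have h1 : k < p ^ k := Nat.lt_pow_self (Fact.out : p.Prime).one_lt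
      calc k ≤ p ^ k := le_of_lt h1
        _ = 1 * p ^ k := (one_mul _).symm
        _ ≤ N := Nat.mul_le_mul_right _ (by omega)
    have hN0 : 0 < N := Nat.mul_pos (by omega) (Nat.pow_pos (by omega))
    have hN0' : (0 : ℝ) < N := by exact_mod_cast hN0
    set t : ℝ := (p : ℝ) ^ ((1 : ℝ) / N) with htdef
    have ht0 : 0 < t := Real.rpow_pos_of_pos hp0 _
    have ht1 : 1 < t := by
      rw [htdef, Real.one_lt_rpow_iff_of_pos hp0]
      exact Or.inl ⟨hp1, by positivity⟩
    have htN : t ^ N = (p : ℝ) := by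
      rw [htdef, ← Real.rpow_natCast ((p : ℝ) ^ ((1 : ℝ) / N)) N, ← Real.rpow_mul
        (le_of_lt hp0), one_div_mul_cancel (ne_of_gt hN0'), Real.rpow_one]
    have htr : t * r < 1 := by
      have h1 : t ^ N < r⁻¹ ^ N := by
        rw [htN]
        calc (p : ℝ) < r⁻¹ ^ k := hk
          _ ≤ r⁻¹ ^ N := pow_le_pow_right₀ (le_of_lt hrinv) hkN
      have h2 : t < r⁻¹ := by
        by_contra hcon
        push_neg at hcon
        exact absurd (pow_le_pow_left₀ (by positivity) hcon N) (not_le.mpr h1)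
      calc t * r < r⁻¹ * r := mul_lt_mul_of_pos_right h2 hr0
        _ = 1 := inv_mul_cancel₀ (ne_of_gt hr0)
    obtain ⟨C, hC⟩ := H k
    have hC' : ∀ n : ℕ, ‖b n‖ * ‖((Nat.factorial (n / p ^ k) : ℚ_[p]))‖ ≤ C :=
      fun n => hC ⟨n, rfl⟩
    have hC0 : 0 ≤ C := le_trans (by positivity) (hC' 0)
    have hbound : ∀ n : ℕ, ‖b n‖ * r ^ n ≤ C * (t * r) ^ n := by
      intro n
      set m : ℕ := n / p ^ k with hmdef
      set v : ℕ := padicValNat p m.factorial with hvdef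
      have hNv : N * v ≤ n := by
        have h1 : (p - 1) * v ≤ m := val_fact_le m
        have h2 : m * p ^ k ≤ n := Nat.div_mul_le_self n (p ^ k)
        calc N * v = p ^ k * ((p - 1) * v) := by rw [hNdef]; ring
          _ ≤ p ^ k * m := Nat.mul_le_mul_left _ h1
          _ ≤ n := by rw [Nat.mul_comm]; exact h2
      have hpv : (p : ℝ) ^ (v : ℝ) ≤ t ^ n := by
        have h1 : (p : ℝ) ^ (v : ℝ) = t ^ (N * v) := by
          rw [pow_mul, htN, ← Real.rpow_natCast (p : ℝ) v]
        rw [h1]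
        exact pow_le_pow_right₀ (le_of_lt ht1) hNv
      have hb : ‖b n‖ ≤ C * t ^ n := by
        have h1 : ‖b n‖ * ((p : ℝ) ^ (-(v : ℝ))) ≤ C := by
          rw [← norm_factorial]; exact hC' n
        have h2 : ‖b n‖ = (‖b n‖ * ((p : ℝ) ^ (-(v : ℝ)))) * (p : ℝ) ^ (v : ℝ) := by
          rw [mul_assoc, ← Real.rpow_add hp0]
          simp
        rw [h2]
        calc (‖b n‖ * ((p : ℝ) ^ (-(v : ℝ)))) * (p : ℝ) ^ (v : ℝ)
            ≤ C * (p : ℝ) ^ (v : ℝ) :=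
              mul_le_mul_of_nonneg_right h1 (le_of_lt (Real.rpow_pos_of_pos hp0 _))
          _ ≤ C * t ^ n := mul_le_mul_of_nonneg_left hpv hC0
      calc ‖b n‖ * r ^ n ≤ (C * t ^ n) * r ^ n :=
            mul_le_mul_of_nonneg_right hb (by positivity)
        _ = C * (t * r) ^ n := by rw [mul_pow]; ring
    have hlim : Tendsto (fun n : ℕ => C * (t * r) ^ n) atTop (nhds 0) := by
      have := (tendsto_pow_atTop_nhds_zero_of_lt_one (by positivity) htr).const_mul C
      simpa using this
    exact squeeze_zero (fun n => by positivity) hbound hlim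

end Stmt3
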